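/- Let n ≥ 2 be an integer, r > 0, and let f : [0, r] → ℝ be continuously differentiable on (0, r] and continuous on [0, r] with f(t) > 0 for t ∈ (0, r]. Let ψ : [0, r] → ℝ be continuously differentiable on [0, r] and twice differentiable on (0, r), with ψ(0) = 0, satisfying (f^{n-1}·ψ')'(t) = (n-1)·f(t)^{n-3}·ψ(t) on (0, r). Assume lim_{t→0⁺} f(t)^{n-1}·ψ(t)·ψ'(t) = 0 and that t ↦ (ψ'(t))²·f(t)^{n-1} and t ↦ ψ(t)²·f(t)^{n-3} are integrable on (0, r). Then ∫₀ʳ (ψ'(t))²·f(t)^{n-1} dt + (n-1)·∫₀ʳ ψ(t)²·f(t)^{n-3} dt = f(r)^{n-1}·ψ(r)·ψ'(r). In particular, if ψ'(r) = v·ψ(r) with ψ(r) ≠ 0, then [∫₀ʳ (ψ')²·f^{n-1} dt + (n-1)·∫₀ʳ ψ²·f^{n-3} dt] / (ψ(r)²·f(r)^{n-1}) = v. -/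

import Mathlib

open Set MeasureTheory

/-- Integration-by-parts identity for the radial Steklov equation
`(f^{n-1}·ψ')' = (n-1)·f^{n-3}·ψ` on `(0, r)` with `ψ 0 = 0`:
`∫₀ʳ (ψ')²·f^{n-1} + (n-1)·∫₀ʳ ψ²·f^{n-3} = f(r)^{n-1}·ψ(r)·ψ'(r)`.
In particular, if `ψ'(r) = v·ψ(r)` with `ψ(r) ≠ 0`, the Rayleigh quotient equals `v`. -/
theorem steklov_radial_rayleigh_identity
    (n : ℕ) (hn : 2 ≤ n) (r : ℝ) (hr : 0 < r) (f f' ψ ψ' : ℝ → ℝ)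
    (hfc : ContinuousOn f (Icc 0 r))
    (hfd : ∀ t ∈ Ioc (0:ℝ) r, HasDerivAt f (f' t) t)
    (hf'c : ContinuousOn f' (Ioc 0 r))
    (hfpos : ∀ t ∈ Ioc (0:ℝ) r, 0 < f t)
    (hψd : ∀ t ∈ Icc (0:ℝ) r, HasDerivAt ψ (ψ' t) t)
    (hψ'c : ContinuousOn ψ' (Icc 0 r))
    (hψ'' : ∀ t ∈ Ioo (0:ℝ) r, DifferentiableAt ℝ ψ' t)
    (hψ0 : ψ 0 = 0)
    (hode : ∀ t ∈ Ioo (0:ℝ) r,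
      HasDerivAt (fun s => f s ^ ((n : ℝ) - 1) * ψ' s)
        (((n : ℝ) - 1) * f t ^ ((n : ℝ) - 3) * ψ t) t)
    (hlim : Filter.Tendsto (fun t => f t ^ ((n : ℝ) - 1) * ψ t * ψ' t)
      (nhdsWithin 0 (Ioi 0)) (nhds 0))
    (hint₁ : IntervalIntegrable (fun t => (ψ' t) ^ 2 * f t ^ ((n : ℝ) - 1)) volume 0 r)
    (hint₂ : IntervalIntegrable (fun t => (ψ t) ^ 2 * f t ^ ((n : ℝ) - 3)) volume 0 r) :
    ((∫ t in (0:ℝ)..r, (ψ' t) ^ 2 * f t ^ ((n : ℝ) - 1)) +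
        ((n : ℝ) - 1) * ∫ t in (0:ℝ)..r, (ψ t) ^ 2 * f t ^ ((n : ℝ) - 3)
      = f r ^ ((n : ℝ) - 1) * ψ r * ψ' r) ∧
    ∀ v : ℝ, ψ' r = v * ψ r → ψ r ≠ 0 →
      ((∫ t in (0:ℝ)..r, (ψ' t) ^ 2 * f t ^ ((n : ℝ) - 1)) +
          ((n : ℝ) - 1) * ∫ t in (0:ℝ)..r, (ψ t) ^ 2 * f t ^ ((n : ℝ) - 3)) /
        ((ψ r) ^ 2 * f r ^ ((n : ℝ) - 1)) = v := by
  -- The function g := f^{n-1}·ψ'·ψ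
  set G : ℝ → ℝ := fun t => f t ^ ((n:ℝ) - 1) * ψ' t * ψ t with hG
  have hfr : 0 < f r := hfpos r ⟨hr, le_refl r⟩
  -- derivative of G on Ioo
  have hGd : ∀ t ∈ Ioo (0:ℝ) r, HasDerivAt G
      ((ψ' t) ^ 2 * f t ^ ((n:ℝ) - 1) + ((n:ℝ) - 1) * ((ψ t) ^ 2 * f t ^ ((n:ℝ) - 3))) t := by
    intro t ht
    have h1 := (hode t ht).mul (hψd t ⟨le_of_lt ht.1, le_of_lt ht.2⟩)
    convert h1 using 1
    · rfl
    · rfl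
    · rfl
    ring
  -- G tends to 0 at 0⁺
  have hG0 : Filter.Tendsto G (nhdsWithin 0 (Ioi 0)) (nhds 0) := by
    have : G = fun t => f t ^ ((n:ℝ) - 1) * ψ t * ψ' t := by
      funext t; simp [hG]; ring
    rw [this]; exact hlim
  -- G continuous at r from the left
  have hGr : Filter.Tendsto G (nhdsWithin r (Iio r)) (nhds (G r)) := by
    have hrm : r ∈ Icc (0:ℝ) r := ⟨le_of_lt hr, le_refl r⟩
    have hcG : ContinuousWithinAt G (Icc 0 r) r := by
      have h1 : ContinuousWithinAt (fun t => f t ^ ((n:ℝ) - 1)) (Icc 0 r) r :=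
        (hfc r hrm).rpow_const (Or.inl (ne_of_gt hfr))
      have h2 : ContinuousWithinAt ψ (Icc 0 r) r := (hψd r hrm).continuousAt.continuousWithinAt
      exact (h1.mul (hψ'c r hrm)).mul h2
    refine hcG.tendsto.mono_left ?_
    rw [nhdsWithin_le_iff]
    filter_upwards [Ioo_mem_nhdsLT_of_mem ⟨hr, le_refl r⟩] with x hx
    exact ⟨le_of_lt hx.1, le_of_lt hx.2⟩
  have hint : IntervalIntegrable
      (fun t => (ψ' t) ^ 2 * f t ^ ((n:ℝ) - 1) + ((n:ℝ) - 1) * ((ψ t) ^ 2 * f t ^ ((n:ℝ) - 3)))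
      volume 0 r := hint₁.add (hint₂.const_mul _)
  have key : (∫ t in (0:ℝ)..r,
      ((ψ' t) ^ 2 * f t ^ ((n:ℝ) - 1) + ((n:ℝ) - 1) * ((ψ t) ^ 2 * f t ^ ((n:ℝ) - 3))))
      = G r - 0 :=
    intervalIntegral.integral_eq_sub_of_hasDerivAt_of_tendsto hr hGd hint hG0 hGr
  rw [intervalIntegral.integral_add hint₁ (hint₂.const_mul _),
    intervalIntegral.integral_const_mul] at key
  have main : ((∫ t in (0:ℝ)..r, (ψ' t) ^ 2 * f t ^ ((n : ℝ) - 1)) +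
        ((n : ℝ) - 1) * ∫ t in (0:ℝ)..r, (ψ t) ^ 2 * f t ^ ((n : ℝ) - 3)
      = f r ^ ((n : ℝ) - 1) * ψ r * ψ' r) := by
    rw [key]; simp [hG]; ring
  refine ⟨main, fun v hv hψr => ?_⟩
  rw [main, hv]
  have hpos : (ψ r) ^ 2 * f r ^ ((n:ℝ) - 1) ≠ 0 := by
    positivity
  field_simp
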